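/- Let J = (x_1x_3, x_1x_4, x_2x_3, x_2x_4) ⊆ S = k[x_1,x_2,x_3,x_4] and R = S/J. The element z = x̄_1 e_2∧e_3∧e_4 − x̄_2 e_1∧e_3∧e_4 is a cycle in the Koszul complex K^R which is not a boundary; moreover its homology class cannot be represented by any monomial cycle. -/

import Mathlib

open MvPolynomial

/-- The Koszul sign `sgn(τ, j) = (-1)^{#{s ∈ τ : s < j}}`. -/
def koszulSgn {n : ℕ} (τ : Finset (Fin n)) (j : Fin n) : ℤ :=
  (-1) ^ ((τ.filter fun s => s < j).card)

/-- The Koszul differential on chains, represented as functions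
`Finset (Fin n) → R` (the value at `σ` is the coefficient of `e_σ`):
`(∂w)(σ) = Σ_{j ∉ σ} sgn(σ ∪ {j}, j) · x_j · w(σ ∪ {j})`. -/
noncomputable def koszulBd {n : ℕ} {R : Type*} [CommRing R] (x : Fin n → R)
    (w : Finset (Fin n) → R) (σ : Finset (Fin n)) : R :=
  ∑ j ∈ σᶜ, koszulSgn (insert j σ) j • (x j * w (insert j σ))

/-- `I` is a monomial ideal: generated by a set of monomials. -/
def IsMonomialIdeal {k : Type*} [Field k] {n : ℕ}
    (I : Ideal (MvPolynomial (Fin n) k)) : Prop :=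
  ∃ G : Set (Fin n →₀ ℕ),
    I = Ideal.span ((fun d => (monomial d (1 : k) : MvPolynomial (Fin n) k)) '' G)

/-- The cycle `z = x̄₁ e₂∧e₃∧e₄ − x̄₂ e₁∧e₃∧e₄` (0-indexed: coefficient `x̄₀` at
`{1,2,3}` and `−x̄₁` at `{0,2,3}`) in the Koszul complex of `S/J`. -/
noncomputable def zCycle (k : Type*) [Field k] (J : Ideal (MvPolynomial (Fin 4) k)) :
    Finset (Fin 4) → (MvPolynomial (Fin 4) k ⧸ J) :=
  fun τ => if τ = ({1, 2, 3} : Finset (Fin 4)) then Ideal.Quotient.mk J (X 0)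
    else if τ = ({0, 2, 3} : Finset (Fin 4)) then - Ideal.Quotient.mk J (X 1) else 0

theorem koszulBd_univ {n : ℕ} {R : Type*} [CommRing R] (x : Fin n → R)
    (w : Finset (Fin n) → R) (σ : Finset (Fin n)) :
    koszulBd x w σ =
      ∑ j : Fin n, if j ∈ σ then 0
        else koszulSgn (insert j σ) j • (x j * w (insert j σ)) := by
  rw [koszulBd, Finset.sum_ite, Finset.sum_const_zero, zero_add]
  congr 1
  ext j; simp

theorem bd123 {R : Type*} [CommRing R] (x : Fin 4 → R) (w : Finset (Fin 4) → R) :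
    koszulBd x w {1,2,3} = x 0 * w {0,1,2,3} := by
  rw [koszulBd, show (({1,2,3} : Finset (Fin 4))ᶜ) = {0} from by decide,
    Finset.sum_singleton,
    show koszulSgn (insert (0:Fin 4) {1,2,3}) 0 = 1 from by decide, one_smul]

theorem bd023 {R : Type*} [CommRing R] (x : Fin 4 → R) (w : Finset (Fin 4) → R) :
    koszulBd x w {0,2,3} = -(x 1 * w {0,1,2,3}) := by
  rw [koszulBd, show (({0,2,3} : Finset (Fin 4))ᶜ) = {1} from by decide,
    Finset.sum_singleton,
    show koszulSgn (insert (1:Fin 4) {0,2,3}) 1 = -1 from by decide]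
  simp [show (insert (1:Fin 4) ({0,2,3}:Finset (Fin 4))) = {0,1,2,3} from by decide]

theorem bd013 {R : Type*} [CommRing R] (x : Fin 4 → R) (w : Finset (Fin 4) → R) :
    koszulBd x w {0,1,3} = x 2 * w {0,1,2,3} := by
  rw [koszulBd, show (({0,1,3} : Finset (Fin 4))ᶜ) = {2} from by decide,
    Finset.sum_singleton,
    show koszulSgn (insert (2:Fin 4) {0,1,3}) 2 = 1 from by decide]
  simp [show (insert (2:Fin 4) ({0,1,3}:Finset (Fin 4))) = {0,1,2,3} from by decide]

theorem bd012 {R : Type*} [CommRing R] (x : Fin 4 → R) (w : Finset (Fin 4) → R) :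
    koszulBd x w {0,1,2} = -(x 3 * w {0,1,2,3}) := by
  rw [koszulBd, show (({0,1,2} : Finset (Fin 4))ᶜ) = {3} from by decide,
    Finset.sum_singleton,
    show koszulSgn (insert (3:Fin 4) {0,1,2}) 3 = -1 from by decide]
  simp [show (insert (3:Fin 4) ({0,1,2}:Finset (Fin 4))) = {0,1,2,3} from by decide]

/-- The key obstruction: there is no `a ∈ S/J` with `x_i a = x_i` (for `i ∈ {0,1}`)
and `x_j a = 0` (for `j ∈ {2,3}`). -/
theorem keyLemma {k : Type*} [Field k] (J : Ideal (MvPolynomial (Fin 4) k))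
    (hJ : J = Ideal.span {X 0 * X 2, X 0 * X 3, X 1 * X 2, X 1 * X 3})
    (a : MvPolynomial (Fin 4) k ⧸ J) (i j : Fin 4) (hi : (i:ℕ) < 2) (hj : 2 ≤ (j:ℕ))
    (h1 : Ideal.Quotient.mk J (X i) * a = Ideal.Quotient.mk J (X i))
    (h2 : Ideal.Quotient.mk J (X j) * a = 0) : False := by
  classical
  let A : MvPolynomial (Fin 4) k →+* MvPolynomial (Fin 4) k :=
    (aeval (fun l : Fin 4 => if (l:ℕ) < 2 then (X l : MvPolynomial (Fin 4) k) else 0)).toRingHom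
  let B : MvPolynomial (Fin 4) k →+* MvPolynomial (Fin 4) k :=
    (aeval (fun l : Fin 4 => if (l:ℕ) < 2 then 0 else (X l : MvPolynomial (Fin 4) k))).toRingHom
  have hAX : ∀ l : Fin 4, A (X l) = if (l:ℕ) < 2 then X l else 0 := fun l => aeval_X _ l
  have hBX : ∀ l : Fin 4, B (X l) = if (l:ℕ) < 2 then 0 else X l := fun l => aeval_X _ l
  have hA : ∀ g ∈ J, A g = 0 := by
    intro g hg
    rw [hJ] at hg
    have h : Ideal.span {X 0 * X 2, X 0 * X 3, X 1 * X 2, X 1 * X 3} ≤ RingHom.ker A := by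
      rw [Ideal.span_le]
      intro p hp
      simp only [Set.mem_insert_iff, Set.mem_singleton_iff] at hp
      rcases hp with h | h | h | h <;> subst h <;> simp [RingHom.mem_ker, map_mul, hAX] <;> try decide
    exact h hg
  have hB : ∀ g ∈ J, B g = 0 := by
    intro g hg
    rw [hJ] at hg
    have h : Ideal.span {X 0 * X 2, X 0 * X 3, X 1 * X 2, X 1 * X 3} ≤ RingHom.ker B := by
      rw [Ideal.span_le]
      intro p hp
      simp only [Set.mem_insert_iff, Set.mem_singleton_iff] at hp
      rcases hp with h | h | h | h <;> subst h <;> simp [RingHom.mem_ker, map_mul, hBX] <;> try decide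
    exact h hg
  let Abar := Ideal.Quotient.lift J A hA
  let Bbar := Ideal.Quotient.lift J B hB
  have hA1 : Abar a = 1 := by
    have h := congrArg Abar h1
    rw [map_mul] at h
    have hmk : Abar (Ideal.Quotient.mk J (X i)) = X i := by
      simp only [Abar, Ideal.Quotient.lift_mk, hAX, if_pos hi]
    rw [hmk] at h
    exact mul_left_cancel₀ (X_ne_zero i) (h.trans (mul_one (X i : MvPolynomial (Fin 4) k)).symm)
  have hB0 : Bbar a = 0 := by
    have h := congrArg Bbar h2
    rw [map_mul, map_zero] at h
    have hmk : Bbar (Ideal.Quotient.mk J (X j)) = X j := by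
      simp only [Bbar, Ideal.Quotient.lift_mk, hBX, if_neg (by omega : ¬ (j:ℕ) < 2)]
    rw [hmk] at h
    rcases mul_eq_zero.mp h with h' | h'
    · exact absurd h' (X_ne_zero j)
    · exact h'
  obtain ⟨f, hf⟩ := Ideal.Quotient.mk_surjective a
  have hcA : constantCoeff (A f) = constantCoeff f := by
    have h : (constantCoeff : MvPolynomial (Fin 4) k →+* k).comp A = constantCoeff := by
      apply MvPolynomial.ringHom_ext
      · intro c; simp [A]
      · intro l; by_cases h : (l:ℕ) < 2 <;> simp [hAX, h]
    exact congrFun (congrArg DFunLike.coe h) f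
  have hcB : constantCoeff (B f) = constantCoeff f := by
    have h : (constantCoeff : MvPolynomial (Fin 4) k →+* k).comp B = constantCoeff := by
      apply MvPolynomial.ringHom_ext
      · intro c; simp [B]
      · intro l; by_cases h : (l:ℕ) < 2 <;> simp [hBX, h]
    exact congrFun (congrArg DFunLike.coe h) f
  have e1 : constantCoeff (A f) = 1 := by
    have h : Abar a = A f := by rw [← hf]; simp [Abar]
    rw [← h, hA1, map_one]
  have e2 : constantCoeff (B f) = 0 := by
    have h : Bbar a = B f := by rw [← hf]; simp [Bbar]
    rw [← h, hB0, map_zero]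
  rw [hcA] at e1; rw [hcB] at e2
  exact one_ne_zero (e1.symm.trans e2)

set_option maxHeartbeats 2000000 in
/-- for `J = (x₁x₃, x₁x₄, x₂x₃, x₂x₄)`, the element
`z = x̄₁ e₂∧e₃∧e₄ − x̄₂ e₁∧e₃∧e₄` is a cycle which is not a boundary, and its
homology class cannot be represented by any monomial cycle. -/
theorem stmt9 (k : Type*) [Field k]
    (J : Ideal (MvPolynomial (Fin 4) k))
    (hJ : J = Ideal.span {X 0 * X 2, X 0 * X 3, X 1 * X 2, X 1 * X 3}) :
    (koszulBd (fun i => Ideal.Quotient.mk J (X i)) (zCycle k J) = 0)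
    ∧ (¬ ∃ w : Finset (Fin 4) → (MvPolynomial (Fin 4) k ⧸ J),
        koszulBd (fun i => Ideal.Quotient.mk J (X i)) w = zCycle k J)
    ∧ (∀ (d : Fin 4 →₀ ℕ) (σ : Finset (Fin 4)),
        koszulBd (fun i => Ideal.Quotient.mk J (X i))
          (fun τ => if τ = σ then Ideal.Quotient.mk J (monomial d (1 : k)) else 0) = 0 →
        ¬ ∃ w : Finset (Fin 4) → (MvPolynomial (Fin 4) k ⧸ J),
          koszulBd (fun i => Ideal.Quotient.mk J (X i)) w
            = fun τ => zCycle k J τ -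
                (if τ = σ then Ideal.Quotient.mk J (monomial d (1 : k)) else 0)) := by
  have hz123 : zCycle k J {1,2,3} = Ideal.Quotient.mk J (X 0) := by
    simp [zCycle]
  have hz023 : zCycle k J {0,2,3} = - Ideal.Quotient.mk J (X 1) := by
    rw [zCycle, if_neg (by decide), if_pos rfl]
  have hz013 : zCycle k J {0,1,3} = 0 := by
    rw [zCycle, if_neg (by decide), if_neg (by decide)]
  have hz012 : zCycle k J {0,1,2} = 0 := by
    rw [zCycle, if_neg (by decide), if_neg (by decide)]
  have hmem : ∀ p ∈ ({X 0 * X 2, X 0 * X 3, X 1 * X 2, X 1 * X 3} :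
      Set (MvPolynomial (Fin 4) k)), Ideal.Quotient.mk J p = 0 := by
    intro p hp
    rw [Ideal.Quotient.eq_zero_iff_mem, hJ]
    exact Ideal.subset_span hp
  have hq : ∀ i j : Fin 4, X i * X j ∈ ({X 0 * X 2, X 0 * X 3, X 1 * X 2, X 1 * X 3} :
      Set (MvPolynomial (Fin 4) k)) →
      Ideal.Quotient.mk J (X i) * Ideal.Quotient.mk J (X j) = 0 := by
    intro i j h
    rw [← map_mul]
    exact hmem _ h
  have hq02 := hq 0 2 (by simp)
  have hq03 := hq 0 3 (by simp)
  have hq12 := hq 1 2 (by simp)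
  have hq13 := hq 1 3 (by simp)
  have hq20 : Ideal.Quotient.mk J (X 2) * Ideal.Quotient.mk J (X 0) = 0 := by
    rw [mul_comm]; exact hq02
  have hq30 : Ideal.Quotient.mk J (X 3) * Ideal.Quotient.mk J (X 0) = 0 := by
    rw [mul_comm]; exact hq03
  have hq21 : Ideal.Quotient.mk J (X 2) * Ideal.Quotient.mk J (X 1) = 0 := by
    rw [mul_comm]; exact hq12
  have hq31 : Ideal.Quotient.mk J (X 3) * Ideal.Quotient.mk J (X 1) = 0 := by
    rw [mul_comm]; exact hq13
  refine ⟨?_, ?_, ?_⟩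
  · -- z is a cycle
    funext σ
    have hcases : ∀ τ : Finset (Fin 4), τ = ∅ ∨ τ = {0} ∨ τ = {1} ∨ τ = {2} ∨ τ = {3} ∨
        τ = {0,1} ∨ τ = {0,2} ∨ τ = {0,3} ∨ τ = {1,2} ∨ τ = {1,3} ∨ τ = {2,3} ∨
        τ = {0,1,2} ∨ τ = {0,1,3} ∨ τ = {0,2,3} ∨ τ = {1,2,3} ∨ τ = {0,1,2,3} := by decide
    have hzdef : ∀ τ, zCycle k J τ = if τ = ({1,2,3} : Finset (Fin 4))
        then Ideal.Quotient.mk J (X 0)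
        else if τ = ({0,2,3} : Finset (Fin 4)) then - Ideal.Quotient.mk J (X 1) else 0 :=
      fun τ => rfl
    rcases hcases σ with h|h|h|h|h|h|h|h|h|h|h|h|h|h|h|h <;> subst h <;>
      · rw [koszulBd_univ, Fin.sum_univ_four]
        simp (config := { decide := true }) only [hzdef, koszulSgn, if_true, if_false]
        try rw [show ((Finset.filter (fun s => s < 0)
          ({0,2,3} : Finset (Fin 4))).card) = 0 from by decide]
        try rw [show ((Finset.filter (fun s => s < 1)
          ({1,2,3} : Finset (Fin 4))).card) = 0 from by decide]
        simp only [hq02, hq03, hq12, hq13, hq20, hq30, hq21, hq31, mul_neg, mul_zero,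
          smul_zero, neg_zero, zero_add, add_zero, pow_zero, one_smul, neg_neg, Pi.zero_apply]
        try exact smul_eq_zero_of_right _ (neg_eq_zero.mpr hq21)
        try exact smul_eq_zero_of_right _ (neg_eq_zero.mpr hq31)
        try exact smul_eq_zero_of_right _ ((mul_neg _ _).trans (neg_eq_zero.mpr hq21))
        try exact smul_eq_zero_of_right _ ((mul_neg _ _).trans (neg_eq_zero.mpr hq31))
        try ring
        try simp only [hq21, hq31, zero_mul, neg_zero]
  · -- not a boundary
    rintro ⟨w, hw⟩
    have e1 := (congrFun hw {1,2,3}).trans hz123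
    rw [bd123] at e1
    have e2 := (congrFun hw {0,1,3}).trans hz013
    rw [bd013] at e2
    exact keyLemma J hJ (w {0,1,2,3}) 0 2 (by decide) (by decide) e1 e2
  · -- not homologous to any monomial cycle
    rintro d σ - ⟨w, hw⟩
    by_cases hσ1 : σ = {1,2,3}
    · subst hσ1
      have e1 := congrFun hw {0,2,3}
      rw [bd023, hz023, if_neg (by decide), sub_zero] at e1
      have e1' := neg_injective e1
      have e2 := congrFun hw {0,1,3}
      rw [bd013, hz013, if_neg (by decide), sub_zero] at e2
      exact keyLemma J hJ (w {0,1,2,3}) 1 2 (by decide) (by decide) e1' e2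
    · by_cases hσ3 : σ = {0,1,3}
      · subst hσ3
        have e1 := congrFun hw {1,2,3}
        rw [bd123, hz123, if_neg (by decide), sub_zero] at e1
        have e2 := congrFun hw {0,1,2}
        rw [bd012, hz012, if_neg (by decide), sub_zero] at e2
        have e2' := neg_eq_zero.mp e2
        exact keyLemma J hJ (w {0,1,2,3}) 0 3 (by decide) (by decide) e1 e2'
      · have e1 := congrFun hw {1,2,3}
        rw [bd123, hz123, if_neg (fun h => hσ1 h.symm), sub_zero] at e1
        have e2 := congrFun hw {0,1,3}
        rw [bd013, hz013, if_neg (fun h => hσ3 h.symm), sub_zero] at e2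
        exact keyLemma J hJ (w {0,1,2,3}) 0 2 (by decide) (by decide) e1 e2
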